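/- Let G₂ be a refinement of a finite connected weighted graph G₁ (obtained by length-preserving subdivision of edges). Then the refinement homomorphism r: C_1(G₁,ℝ) → C_1(G₂,ℝ) restricts to an isomorphism H_1(G₁,ℝ) ≅ H_1(G₂,ℝ) that maps H_1(G₁,ℤ) onto H_1(G₂,ℤ), and r(im(d₁)_ℤ) ⊆ im(d₂)_ℤ. -/

import Mathlib

/-- A finite weighted (multi)graph with a fixed orientation of the edges:
vertex type `V`, edge type `E`, tail/head maps and a positive length function. -/
structure WGraph where
  V : Type
  E : Type
  [fV : Fintype V]
  [fE : Fintype E]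
  [dV : DecidableEq V]
  [dE : DecidableEq E]
  tail : E → V
  head : E → V
  len : E → ℝ
  len_pos : ∀ e, 0 < len e

attribute [instance] WGraph.fV WGraph.fE WGraph.dV WGraph.dE

namespace WGraph

variable (G : WGraph)

/-- Two vertices are adjacent if some edge joins them (in either direction). -/
def Adj (x y : G.V) : Prop :=
  ∃ e, (G.tail e = x ∧ G.head e = y) ∨ (G.tail e = y ∧ G.head e = x)

/-- A weighted graph is connected if any two vertices are joined by a walk. -/
def Connected : Prop := ∀ x y : G.V, Relation.ReflTransGen G.Adj x y

/-- The differential `d : C_0(G,ℝ) → C_1(G,ℝ)`, `(df)(e) = (f(e⁺) - f(e⁻))/ℓ(e)`. -/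
noncomputable def d (f : G.V → ℝ) : G.E → ℝ :=
  fun e => (f (G.head e) - f (G.tail e)) / G.len e

/-- The adjoint `d* : C_1(G,ℝ) → C_0(G,ℝ)`,
`(d*α)(x) = Σ_{e⁺ = x} α(e) - Σ_{e⁻ = x} α(e)`. -/
def dStar (α : G.E → ℝ) : G.V → ℝ := fun x =>
  (∑ e ∈ Finset.univ.filter fun e => G.head e = x, α e) -
    ∑ e ∈ Finset.univ.filter fun e => G.tail e = x, α e

/-- The inner product `⟨α,β⟩ = Σ_e α(e) β(e) ℓ(e)` on real 1-chains. -/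
noncomputable def ip (α β : G.E → ℝ) : ℝ := ∑ e, α e * β e * G.len e

/-- Real 1-cycles: the kernel of `d*`. -/
def IsCycle (α : G.E → ℝ) : Prop := ∀ x, G.dStar α x = 0

/-- Exact 1-chains: the image of `d`. -/
def IsExact (α : G.E → ℝ) : Prop := ∃ f : G.V → ℝ, α = G.d f

/-- A 1-form `ω = Σ ω_e de` (recorded by its coefficients) is harmonic if at every
vertex the incoming and outgoing coefficients sum to the same value. -/
def Harmonic (ω : G.E → ℝ) : Prop :=
  ∀ x, (∑ e ∈ Finset.univ.filter fun e => G.head e = x, ω e) =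
    ∑ e ∈ Finset.univ.filter fun e => G.tail e = x, ω e

/-- Integration of the 1-form `ω` along the 1-chain `α`: `∫_α ω = Σ_e ω_e α(e) ℓ(e)`. -/
noncomputable def intPair (ω α : G.E → ℝ) : ℝ := ∑ e, ω e * α e * G.len e

/-- `d*` on integral 1-chains. -/
def dStarZ (α : G.E → ℤ) : G.V → ℤ := fun x =>
  (∑ e ∈ Finset.univ.filter fun e => G.head e = x, α e) -
    ∑ e ∈ Finset.univ.filter fun e => G.tail e = x, α e

/-- Integral 1-cycles. -/
def IsCycleZ (α : G.E → ℤ) : Prop := ∀ x, G.dStarZ α x = 0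

/-- `α ∈ im(d)_ℤ`: `α` is an integral 1-chain which is the differential of a real
function on the vertices (a function with integer slopes). -/
def IsExactZ (α : G.E → ℤ) : Prop :=
  ∃ f : G.V → ℝ, ∀ e, (α e : ℝ) = G.d f e

/-- The subgroup `H_1(G,ℤ) ⊕ im(d)_ℤ` of `C_1(G,ℤ)`, i.e. the subgroup generated by
integral cycles together with integral exact chains. -/
def jacRel : AddSubgroup (G.E → ℤ) :=
  AddSubgroup.closure {α | G.IsCycleZ α ∨ G.IsExactZ α}

/-- The Jacobian group of a weighted graph: `J(G) = C_1(G,ℤ)/(H_1(G,ℤ) ⊕ im(d)_ℤ)`. -/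
def Jac := (G.E → ℤ) ⧸ G.jacRel

noncomputable instance : AddCommGroup G.Jac :=
  inferInstanceAs (AddCommGroup ((G.E → ℤ) ⧸ G.jacRel))

/-- Divisors of degree zero. -/
def Div0 : AddSubgroup (G.V → ℤ) where
  carrier := {D | ∑ x, D x = 0}
  add_mem' := by
    intro a b ha hb
    simp only [Set.mem_setOf_eq] at *
    simp [Finset.sum_add_distrib, ha, hb]
  zero_mem' := by simp
  neg_mem' := by
    intro a ha
    simp only [Set.mem_setOf_eq] at *
    simp [ha]

/-- `d*` as a group homomorphism on integral 1-chains. -/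
def dStarZHom : (G.E → ℤ) →+ (G.V → ℤ) where
  toFun := G.dStarZ
  map_zero' := by funext x; simp [dStarZ]
  map_add' := by
    intro a b
    funext x
    simp [dStarZ, Finset.sum_add_distrib]
    ring

/-- The subgroup `im(d)_ℤ` of `C_1(G,ℤ)`. -/
def imdZ : AddSubgroup (G.E → ℤ) where
  carrier := {α | G.IsExactZ α}
  add_mem' := by
    rintro a b ⟨f, hf⟩ ⟨g, hg⟩
    exact ⟨f + g, fun e => by
      simp only [Pi.add_apply, Int.cast_add, hf e, hg e, d]; ring⟩
  zero_mem' := ⟨0, fun e => by simp [d]⟩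
  neg_mem' := by
    rintro a ⟨f, hf⟩
    exact ⟨-f, fun e => by
      simp only [Pi.neg_apply, Int.cast_neg, hf e, d]; ring⟩

/-- Principal divisors: `Prin(G) = d*(im(d)_ℤ)`. -/
def Prin : AddSubgroup (G.V → ℤ) := G.imdZ.map G.dStarZHom

lemma sum_dStarZ (α : G.E → ℤ) : ∑ x, G.dStarZ α x = 0 := by
  simp only [dStarZ, Finset.sum_sub_distrib]
  rw [Finset.sum_fiberwise, Finset.sum_fiberwise]
  simp

/-- The degree-zero Picard group `Pic(G) = Div⁰(G)/Prin(G)`. -/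
def PicZ := G.Div0 ⧸ (G.Prin.addSubgroupOf G.Div0)

noncomputable instance : AddCommGroup G.PicZ :=
  inferInstanceAs (AddCommGroup (G.Div0 ⧸ (G.Prin.addSubgroupOf G.Div0)))

/-- The weighted graph obtained by deleting the edge `e₀`. -/
def delEdge (e₀ : G.E) : WGraph where
  V := G.V
  E := {e : G.E // e ≠ e₀}
  tail := fun e => G.tail e.1
  head := fun e => G.head e.1
  len := fun e => G.len e.1
  len_pos := fun e => G.len_pos e.1

/-- An edge is a bridge if deleting it disconnects the graph. -/
def IsBridge (e₀ : G.E) : Prop := ¬ (G.delEdge e₀).Connected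

/-- The weighted graph obtained by deleting a vertex `z` (and all incident edges). -/
def delVertex (z : G.V) : WGraph where
  V := {x : G.V // x ≠ z}
  E := {e : G.E // G.tail e ≠ z ∧ G.head e ≠ z}
  tail := fun e => ⟨G.tail e.1, e.2.1⟩
  head := fun e => ⟨G.head e.1, e.2.2⟩
  len := fun e => G.len e.1
  len_pos := fun e => G.len_pos e.1

open scoped Classical in
/-- The (discrete) potential kernel: `jKer z y` is the function `f` with `f(z) = 0`
and `Δf = δ_y - δ_z` (when such a function exists; it is unique on a
connected graph). -/
noncomputable def jKer (z y : G.V) : G.V → ℝ :=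
  if h : ∃ f : G.V → ℝ, f z = 0 ∧ ∀ w, G.dStar (G.d f) w =
      (if w = y then 1 else 0) - (if w = z then 1 else 0)
  then h.choose else 0

/-- Connectivity using only the edges in `S`. -/
def ConnectedOn (S : Finset G.E) : Prop :=
  ∀ x y : G.V, Relation.ReflTransGen
    (fun a b => ∃ e ∈ S, (G.tail e = a ∧ G.head e = b) ∨ (G.tail e = b ∧ G.head e = a)) x y

/-- A spanning tree: a spanning connected edge set with `#V - 1` edges. -/
def IsSpanningTree (T : Finset G.E) : Prop :=
  G.ConnectedOn T ∧ T.card + 1 = Fintype.card G.V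

/-- The weight `w(T) = Π_{e ∉ T} ℓ(e)` of a spanning tree. -/
noncomputable def wt (T : Finset G.E) : ℝ := ∏ e ∈ Finset.univ \ T, G.len e

open scoped Classical in
/-- `w(G) = Σ_T w(T)`, summed over all spanning trees. -/
noncomputable def wG : ℝ := ∑ T : Finset G.E, if G.IsSpanningTree T then G.wt T else 0

open scoped Classical in
/-- The Foster coefficient `F(e) = (1/w(G)) Σ_{T : e ∉ T} w(T)`. -/
noncomputable def foster (e : G.E) : ℝ :=
  (1 / G.wG) * ∑ T : Finset G.E, if G.IsSpanningTree T ∧ e ∉ T then G.wt T else 0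

open scoped Classical in
/-- The fundamental cycle `α_{T,e}`: the unique 1-cycle supported on `T ∪ {e}` taking
the value `1` on `e`; by convention it is `0` when no such cycle exists
(e.g. when `e ∈ T`). -/
noncomputable def fundCycle (T : Finset G.E) (e : G.E) : G.E → ℝ :=
  if h : ∃ α : G.E → ℝ, G.IsCycle α ∧ α e = 1 ∧ ∀ f, f ∉ T → f ≠ e → α f = 0
  then h.choose else 0

end WGraph

namespace WGraph

/-- A refinement of `G₁`: the graph `G₂` is obtained from `G₁` by subdividing each
edge `e` into `n e` consecutive edges, in a length-preserving and
orientation-compatible manner. -/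
structure Refinement (G₁ G₂ : WGraph) where
  /-- the injection on vertices -/
  a : G₁.V → G₂.V
  ainj : Function.Injective a
  /-- the surjection on edges, sending a subdivision edge to the edge it subdivides -/
  b : G₂.E → G₁.E
  /-- the number of subdivision edges of each edge -/
  n : G₁.E → ℕ
  npos : ∀ e, 0 < n e
  /-- the vertices along the subdivision of `e` -/
  vtx : (e : G₁.E) → Fin (n e + 1) → G₂.V
  /-- the subdivision edges of `e`, in order -/
  ed : (e : G₁.E) → Fin (n e) → G₂.E
  /-- every edge of `G₂` is a subdivision edge of exactly one edge of `G₁`, exactly once -/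
  ed_bij : Function.Bijective (fun p : Σ e : G₁.E, Fin (n e) => ed p.1 p.2)
  b_ed : ∀ e i, b (ed e i) = e
  /-- subdividing preserves lengths -/
  len_sum : ∀ e, ∑ i, G₂.len (ed e i) = G₁.len e
  vtx_zero : ∀ e, vtx e 0 = a (G₁.tail e)
  vtx_last : ∀ e, vtx e (Fin.last (n e)) = a (G₁.head e)
  tail_ed : ∀ e i, G₂.tail (ed e i) = vtx e i.castSucc
  head_ed : ∀ e i, G₂.head (ed e i) = vtx e i.succ
  /-- interior subdivision vertices are new vertices -/
  vtx_fresh : ∀ e (i : Fin (n e + 1)), i ≠ 0 → i ≠ Fin.last (n e) → ∀ x, vtx e i ≠ a x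
  /-- interior subdivision vertices of (possibly different) edges are pairwise distinct -/
  vtx_inj : ∀ e e' (i : Fin (n e + 1)) (i' : Fin (n e' + 1)),
    i ≠ 0 → i ≠ Fin.last (n e) → i' ≠ 0 → i' ≠ Fin.last (n e') →
    vtx e i = vtx e' i' → e = e' ∧ (i : ℕ) = (i' : ℕ)
  /-- every vertex of `G₂` is an old vertex or an interior subdivision vertex -/
  vtx_surj : ∀ v : G₂.V, (∃ x, v = a x) ∨ ∃ e i, v = vtx e i

/-- The refinement homomorphism `r : C_1(G₁,A) → C_1(G₂,A)` sending each edge to the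
sum of its subdivision edges; as a function on edges, `r(α)(e') = α(b(e'))`. -/
def Refinement.r {G₁ G₂ : WGraph} (R : Refinement G₁ G₂) {A : Type*} (α : G₁.E → A) :
    G₂.E → A := fun e' => α (R.b e')

end WGraph
namespace WGraph
namespace Refinement

open Finset

variable {G₁ G₂ : WGraph} (R : Refinement G₁ G₂)

/-- generic `d*`-shaped operator over any additive group. -/
def gd (G : WGraph) {A : Type*} [AddCommGroup A] (β : G.E → A) (x : G.V) : A :=
  (∑ e ∈ Finset.univ.filter fun e => G.head e = x, β e) -
    ∑ e ∈ Finset.univ.filter fun e => G.tail e = x, β e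

lemma dStar_eq_gd (G : WGraph) (β : G.E → ℝ) : G.dStar β = gd G β := rfl

lemma dStarZ_eq_gd (G : WGraph) (β : G.E → ℤ) : G.dStarZ β = gd G β := rfl

lemma b_surj : Function.Surjective R.b :=
  fun e => ⟨R.ed e ⟨0, R.npos e⟩, R.b_ed e _⟩

section sums
variable {A : Type*} [AddCommMonoid A]

lemma sumSigma (β : G₂.E → A) (p : G₂.E → Prop) [DecidablePred p] :
    ∑ e' ∈ Finset.univ.filter p, β e' =
      ∑ q : Σ e : G₁.E, Fin (R.n e), if p (R.ed q.1 q.2) then β (R.ed q.1 q.2) else 0 := by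
  rw [Finset.sum_filter]
  exact (Fintype.sum_bijective _ R.ed_bij _ _ (fun q => rfl)).symm

lemma succ_eq_a_iff (e : G₁.E) (i : Fin (R.n e)) (x : G₁.V) :
    R.vtx e i.succ = R.a x ↔ ((i : ℕ) + 1 = R.n e ∧ G₁.head e = x) := by
  constructor
  · intro h
    have hs : i.succ = Fin.last (R.n e) := by
      by_contra hl
      exact R.vtx_fresh e i.succ (Fin.succ_ne_zero i) hl x h
    have hv : (i : ℕ) + 1 = R.n e := by
      have := congrArg Fin.val hs; simpa using this
    refine ⟨hv, R.ainj ?_⟩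
    rw [← R.vtx_last e, ← hs, h]
  · rintro ⟨hv, rfl⟩
    have hs : i.succ = Fin.last (R.n e) := by
      apply Fin.ext; simpa using hv
    rw [hs, R.vtx_last]

lemma castSucc_eq_a_iff (e : G₁.E) (i : Fin (R.n e)) (x : G₁.V) :
    R.vtx e i.castSucc = R.a x ↔ ((i : ℕ) = 0 ∧ G₁.tail e = x) := by
  constructor
  · intro h
    have hl : i.castSucc ≠ Fin.last (R.n e) := by
      intro hh
      have := congrArg Fin.val hh
      simp at this
      omega
    have hs : i.castSucc = 0 := by
      by_contra h0
      exact R.vtx_fresh e i.castSucc h0 hl x h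
    have hv : (i : ℕ) = 0 := by
      have := congrArg Fin.val hs; simpa using this
    refine ⟨hv, R.ainj ?_⟩
    rw [← R.vtx_zero e, ← hs, h]
  · rintro ⟨hv, rfl⟩
    have hs : i.castSucc = 0 := by apply Fin.ext; simpa using hv
    rw [hs, R.vtx_zero]

lemma sum_head_a (β : G₂.E → A) (x : G₁.V) :
    ∑ e' ∈ Finset.univ.filter (fun e' => G₂.head e' = R.a x), β e' =
      ∑ e ∈ Finset.univ.filter (fun e => G₁.head e = x),
        β (R.ed e ⟨R.n e - 1, by have := R.npos e; omega⟩) := by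
  rw [R.sumSigma, ← Finset.univ_sigma_univ, Finset.sum_sigma, Finset.sum_filter]
  refine Finset.sum_congr rfl fun e _ => ?_
  simp only [R.head_ed, R.succ_eq_a_iff]
  by_cases hx : G₁.head e = x
  · simp only [hx, and_true, if_true]
    have : ∀ i : Fin (R.n e), ((i : ℕ) + 1 = R.n e) = (i = ⟨R.n e - 1, by have := R.npos e; omega⟩) := by
      intro i
      have hi := i.isLt
      apply propext
      simp only [Fin.ext_iff]
      constructor <;> intro h <;> omega
    simp only [this]
    rw [Finset.sum_ite_eq' Finset.univ]
    simp
  · simp [hx]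

lemma sum_tail_a (β : G₂.E → A) (x : G₁.V) :
    ∑ e' ∈ Finset.univ.filter (fun e' => G₂.tail e' = R.a x), β e' =
      ∑ e ∈ Finset.univ.filter (fun e => G₁.tail e = x),
        β (R.ed e ⟨0, R.npos e⟩) := by
  rw [R.sumSigma, ← Finset.univ_sigma_univ, Finset.sum_sigma, Finset.sum_filter]
  refine Finset.sum_congr rfl fun e _ => ?_
  simp only [R.tail_ed, R.castSucc_eq_a_iff]
  by_cases hx : G₁.tail e = x
  · simp only [hx, and_true, if_true]
    have : ∀ i : Fin (R.n e), ((i : ℕ) = 0) = (i = ⟨0, R.npos e⟩) := by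
      intro i
      apply propext
      simp [Fin.ext_iff, eq_comm]
    simp only [this]
    rw [Finset.sum_ite_eq' Finset.univ]
    simp
  · simp [hx]

lemma interior_val_pos (e₀ : G₁.E) (i₀ : Fin (R.n e₀ + 1)) (h0 : i₀ ≠ 0) : 0 < (i₀ : ℕ) := by
  rcases Nat.eq_zero_or_pos (i₀ : ℕ) with h | h
  · exact absurd (Fin.ext (by simpa using h)) h0
  · exact h

lemma interior_val_lt (e₀ : G₁.E) (i₀ : Fin (R.n e₀ + 1)) (hl : i₀ ≠ Fin.last (R.n e₀)) : (i₀ : ℕ) < R.n e₀ := by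
  have := i₀.isLt
  rcases Nat.lt_or_ge (i₀ : ℕ) (R.n e₀) with h | h
  · exact h
  · exact absurd (Fin.ext (by simp [Fin.val_last]; omega)) hl

lemma sum_head_interior (e₀ : G₁.E) (i₀ : Fin (R.n e₀ + 1)) (h0 : i₀ ≠ 0)
    (hl : i₀ ≠ Fin.last (R.n e₀)) (β : G₂.E → A) :
    ∑ e' ∈ Finset.univ.filter (fun e' => G₂.head e' = R.vtx e₀ i₀), β e' =
      β (R.ed e₀ ⟨(i₀ : ℕ) - 1, by have := R.interior_val_lt e₀ i₀ hl; omega⟩) := by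
  have hvlt := R.interior_val_lt e₀ i₀ hl
  have hvpos := R.interior_val_pos e₀ i₀ h0
  set q₀ : Σ e : G₁.E, Fin (R.n e) := ⟨e₀, ⟨(i₀ : ℕ) - 1, by omega⟩⟩ with hq₀
  rw [R.sumSigma]
  rw [Finset.sum_eq_single q₀]
  · rw [if_pos]
    simp only [hq₀, R.head_ed]
    congr 1
    all_goals first | rfl | (apply Fin.ext; simp; have : (q₀.2 : ℕ) = (i₀ : ℕ) - 1 := rfl; omega)
  · rintro ⟨e, i⟩ _ hne
    rw [if_neg]
    simp only [R.head_ed]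
    intro h
    apply hne
    have hs0 : i.succ ≠ 0 := Fin.succ_ne_zero i
    have hsl : i.succ ≠ Fin.last (R.n e) := by
      intro hh
      rw [hh, R.vtx_last] at h
      exact R.vtx_fresh e₀ i₀ h0 hl _ h.symm
    obtain ⟨he, hv⟩ := R.vtx_inj e e₀ i.succ i₀ hs0 hsl h0 hl h
    subst he
    simp at hv
    simp [hq₀, Sigma.ext_iff, Fin.ext_iff]
    omega
  · intro h
    exact absurd (Finset.mem_univ q₀) h

lemma sum_tail_interior (e₀ : G₁.E) (i₀ : Fin (R.n e₀ + 1)) (h0 : i₀ ≠ 0)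
    (hl : i₀ ≠ Fin.last (R.n e₀)) (β : G₂.E → A) :
    ∑ e' ∈ Finset.univ.filter (fun e' => G₂.tail e' = R.vtx e₀ i₀), β e' =
      β (R.ed e₀ ⟨(i₀ : ℕ), R.interior_val_lt e₀ i₀ hl⟩) := by
  have hvlt := R.interior_val_lt e₀ i₀ hl
  set q₀ : Σ e : G₁.E, Fin (R.n e) := ⟨e₀, ⟨(i₀ : ℕ), hvlt⟩⟩ with hq₀
  rw [R.sumSigma]
  rw [Finset.sum_eq_single q₀]
  · rw [if_pos]
    simp only [hq₀, R.tail_ed]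
    congr 1
    all_goals first | rfl | (apply Fin.ext; simp)
  · rintro ⟨e, i⟩ _ hne
    rw [if_neg]
    simp only [R.tail_ed]
    intro h
    apply hne
    have hsl : i.castSucc ≠ Fin.last (R.n e) := by
      intro hh
      have := congrArg Fin.val hh
      simp at this
      have := i.isLt
      omega
    have hs0 : i.castSucc ≠ 0 := by
      intro hh
      rw [hh, R.vtx_zero] at h
      exact R.vtx_fresh e₀ i₀ h0 hl _ h.symm
    obtain ⟨he, hv⟩ := R.vtx_inj e e₀ i.castSucc i₀ hs0 hsl h0 hl h
    subst he
    simp at hv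
    simp [hq₀, Sigma.ext_iff, Fin.ext_iff]
    omega
  · intro h
    exact absurd (Finset.mem_univ q₀) h

end sums


section cycles
variable {A : Type*} [AddCommGroup A]

lemma gd_r_a (α : G₁.E → A) (x : G₁.V) : gd G₂ (R.r α) (R.a x) = gd G₁ α x := by
  unfold gd
  rw [R.sum_head_a, R.sum_tail_a]
  simp only [Refinement.r, R.b_ed]

lemma gd_interior (β : G₂.E → A) (e₀ : G₁.E) (i₀ : Fin (R.n e₀ + 1)) (h0 : i₀ ≠ 0)
    (hl : i₀ ≠ Fin.last (R.n e₀)) :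
    gd G₂ β (R.vtx e₀ i₀) =
      β (R.ed e₀ ⟨(i₀ : ℕ) - 1, by have := R.interior_val_lt e₀ i₀ hl; omega⟩) -
        β (R.ed e₀ ⟨(i₀ : ℕ), R.interior_val_lt e₀ i₀ hl⟩) := by
  unfold gd
  rw [R.sum_head_interior e₀ i₀ h0 hl, R.sum_tail_interior e₀ i₀ h0 hl]

lemma gd_r_vanishes (α : G₁.E → A) (hα : ∀ x, gd G₁ α x = 0) (v : G₂.V) :
    gd G₂ (R.r α) v = 0 := by
  rcases R.vtx_surj v with ⟨x, rfl⟩ | ⟨e, i, rfl⟩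
  · rw [R.gd_r_a]; exact hα x
  · by_cases h0 : i = 0
    · subst h0; rw [R.vtx_zero, R.gd_r_a]; exact hα _
    by_cases hl : i = Fin.last (R.n e)
    · subst hl; rw [R.vtx_last, R.gd_r_a]; exact hα _
    rw [R.gd_interior _ e i h0 hl]
    simp [Refinement.r, R.b_ed]

lemma gd_cycle_iff (α : G₁.E → A) : (∀ x, gd G₁ α x = 0) ↔ (∀ v, gd G₂ (R.r α) v = 0) := by
  constructor
  · exact R.gd_r_vanishes α
  · intro h x
    rw [← R.gd_r_a]
    exact h (R.a x)

lemma cycle_const (β : G₂.E → A) (hβ : ∀ v, gd G₂ β v = 0) (e : G₁.E) :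
    ∀ k (hk : k < R.n e), β (R.ed e ⟨k, hk⟩) = β (R.ed e ⟨0, R.npos e⟩) := by
  intro k
  induction k with
  | zero => intro hk; rfl
  | succ m ih =>
    intro hk
    have hm : m < R.n e := by omega
    set i₀ : Fin (R.n e + 1) := ⟨m + 1, by omega⟩ with hi₀
    have h0 : i₀ ≠ 0 := by simp [hi₀, Fin.ext_iff]
    have hl : i₀ ≠ Fin.last (R.n e) := by simp [hi₀, Fin.ext_iff]; omega
    have := hβ (R.vtx e i₀)
    rw [R.gd_interior β e i₀ h0 hl] at this
    have heq : β (R.ed e ⟨m + 1, hk⟩) = β (R.ed e ⟨m, hm⟩) := by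
      rw [sub_eq_zero] at this
      convert this.symm using 3
      exact Fin.ext (by simp [hi₀])
    rw [heq]
    exact ih hm

lemma cycle_surj (β : G₂.E → A) (hβ : ∀ v, gd G₂ β v = 0) :
    ∃ α : G₁.E → A, R.r α = β := by
  refine ⟨fun e => β (R.ed e ⟨0, R.npos e⟩), ?_⟩
  funext e'
  obtain ⟨⟨e, i⟩, rfl⟩ := R.ed_bij.surjective e'
  show β (R.ed (R.b (R.ed e i)) ⟨0, R.npos _⟩) = β (R.ed e i)
  have key : ∀ e₀ (h : R.b (R.ed e i) = e₀), β (R.ed e₀ ⟨0, R.npos e₀⟩) = β (R.ed e i) := by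
    rintro e₀ h
    rw [R.b_ed] at h
    subst h
    simpa using (R.cycle_const β hβ e i.val i.isLt).symm
  exact key _ rfl

end cycles


section exact

/-- Partial length of the subdivision path of `e` up to the `k`-th vertex. -/
noncomputable def S (e : G₁.E) (k : ℕ) : ℝ :=
  ∑ j ∈ Finset.univ.filter (fun j : Fin (R.n e) => (j : ℕ) < k), G₂.len (R.ed e j)

lemma S_zero (e : G₁.E) : R.S e 0 = 0 := by simp [S]

lemma S_top (e : G₁.E) : R.S e (R.n e) = G₁.len e := by
  rw [S, ← R.len_sum e]
  apply Finset.sum_congr _ (fun _ _ => rfl)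
  apply Finset.filter_true_of_mem
  intro j _
  exact j.isLt

lemma S_succ (e : G₁.E) (k : ℕ) (hk : k < R.n e) :
    R.S e (k + 1) = R.S e k + G₂.len (R.ed e ⟨k, hk⟩) := by
  unfold S
  rw [Finset.sum_filter, Finset.sum_filter]
  have : ∀ j : Fin (R.n e),
      (if (j : ℕ) < k + 1 then G₂.len (R.ed e j) else 0) =
        (if (j : ℕ) < k then G₂.len (R.ed e j) else 0) +
          (if j = ⟨k, hk⟩ then G₂.len (R.ed e j) else 0) := by
    intro j
    by_cases h1 : (j : ℕ) < k
    · rw [if_pos (by omega), if_pos h1, if_neg (by simp [Fin.ext_iff]; omega)]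
      ring
    · by_cases h2 : (j : ℕ) = k
      · rw [if_pos (by omega), if_neg h1, if_pos (by simp [Fin.ext_iff, h2])]
        ring
      · rw [if_neg (by omega), if_neg h1, if_neg (by simp [Fin.ext_iff]; omega)]
        ring
  rw [Finset.sum_congr rfl (fun j _ => this j), Finset.sum_add_distrib,
    Finset.sum_ite_eq' Finset.univ]
  simp

/-- The refined potential function. -/
noncomputable def gfun (f : G₁.V → ℝ) (c : G₁.E → ℝ) : G₂.V → ℝ := fun v =>
  if h : ∃ x, v = R.a x then f h.choose
  else if h2 : ∃ p : Σ e : G₁.E, Fin (R.n e + 1), v = R.vtx p.1 p.2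
    then f (G₁.tail h2.choose.1) + c h2.choose.1 * R.S h2.choose.1 (h2.choose.2 : ℕ)
    else 0

lemma gfun_a (f : G₁.V → ℝ) (c : G₁.E → ℝ) (x : G₁.V) :
    R.gfun f c (R.a x) = f x := by
  have h : ∃ y, R.a x = R.a y := ⟨x, rfl⟩
  rw [gfun, dif_pos h]
  congr 1
  exact (R.ainj h.choose_spec).symm

lemma gfun_vtx (f : G₁.V → ℝ) (c : G₁.E → ℝ)
    (hc : ∀ e, c e * G₁.len e = f (G₁.head e) - f (G₁.tail e))
    (e : G₁.E) (i : Fin (R.n e + 1)) :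
    R.gfun f c (R.vtx e i) = f (G₁.tail e) + c e * R.S e (i : ℕ) := by
  by_cases h0 : i = 0
  · subst h0
    rw [R.vtx_zero, R.gfun_a]
    simp [R.S_zero]
  by_cases hl : i = Fin.last (R.n e)
  · subst hl
    rw [R.vtx_last, R.gfun_a]
    simp only [Fin.val_last, R.S_top, hc e]
    ring
  -- interior
  have hfresh : ¬ ∃ x, R.vtx e i = R.a x := by
    rintro ⟨x, hx⟩
    exact R.vtx_fresh e i h0 hl x hx
  have h2 : ∃ p : Σ e' : G₁.E, Fin (R.n e' + 1), R.vtx e i = R.vtx p.1 p.2 :=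
    ⟨⟨e, i⟩, rfl⟩
  rw [gfun, dif_neg hfresh, dif_pos h2]
  have hp := h2.choose_spec
  set p := h2.choose with hpdef
  clear_value p
  have hp0 : p.2 ≠ 0 := by
    intro hh
    apply hfresh
    refine ⟨G₁.tail p.1, ?_⟩
    rw [hp, hh, R.vtx_zero]
  have hpl : p.2 ≠ Fin.last (R.n p.1) := by
    intro hh
    apply hfresh
    refine ⟨G₁.head p.1, ?_⟩
    rw [hp, hh, R.vtx_last]
  obtain ⟨pe, pi⟩ := p
  obtain ⟨he, hv⟩ := R.vtx_inj e pe i pi h0 hl hp0 hpl hp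
  subst he
  have hip : i = pi := Fin.ext hv
  subst hip
  rfl

lemma exact_lift (α : G₁.E → ℤ) (h : G₁.IsExactZ α) : G₂.IsExactZ (R.r α) := by
  obtain ⟨f, hf⟩ := h
  set c : G₁.E → ℝ := fun e => (α e : ℝ) with hcdef
  have hc : ∀ e, c e * G₁.len e = f (G₁.head e) - f (G₁.tail e) := by
    intro e
    have hlen := (G₁.len_pos e).ne'
    have := hf e
    rw [WGraph.d] at this
    rw [hcdef]
    simp only [this, div_mul_cancel₀ _ hlen]
  refine ⟨R.gfun f c, ?_⟩
  intro e'
  obtain ⟨⟨e, i⟩, rfl⟩ := R.ed_bij.surjective e'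
  have hr : ((R.r α (R.ed e i) : ℤ) : ℝ) = c e := by
    show ((α (R.b (R.ed e i)) : ℝ)) = c e
    rw [R.b_ed, hcdef]
  rw [hr, WGraph.d, R.head_ed, R.tail_ed,
    R.gfun_vtx f c hc e i.succ, R.gfun_vtx f c hc e i.castSucc]
  have hval : ((i.succ : Fin (R.n e + 1)) : ℕ) = (i : ℕ) + 1 := by simp
  have hval2 : ((i.castSucc : Fin (R.n e + 1)) : ℕ) = (i : ℕ) := by simp
  rw [hval, hval2, R.S_succ e (i : ℕ) i.isLt]
  have hi : (⟨(i : ℕ), i.isLt⟩ : Fin (R.n e)) = i := by apply Fin.ext; rfl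
  rw [hi]
  have hlen := (G₂.len_pos (R.ed e i)).ne'
  field_simp
  ring

end exact

end Refinement
end WGraph

/-- The refinement homomorphism `r` is injective, induces an
isomorphism `H₁(G₁,ℝ) ≅ H₁(G₂,ℝ)` mapping `H₁(G₁,ℤ)` onto `H₁(G₂,ℤ)`, and maps
`im(d₁)_ℤ` into `im(d₂)_ℤ`. -/
theorem refinement_homology (G₁ G₂ : WGraph) (hG₁ : G₁.Connected)
    (R : WGraph.Refinement G₁ G₂) :
    Function.Injective (fun α : G₁.E → ℝ => R.r α) ∧
    (∀ α : G₁.E → ℝ, G₁.IsCycle α ↔ G₂.IsCycle (R.r α)) ∧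
    (∀ β : G₂.E → ℝ, G₂.IsCycle β → ∃ α : G₁.E → ℝ, G₁.IsCycle α ∧ R.r α = β) ∧
    (∀ α : G₁.E → ℤ, G₁.IsCycleZ α ↔ G₂.IsCycleZ (R.r α)) ∧
    (∀ β : G₂.E → ℤ, G₂.IsCycleZ β → ∃ α : G₁.E → ℤ, G₁.IsCycleZ α ∧ R.r α = β) ∧
    (∀ α : G₁.E → ℤ, G₁.IsExactZ α → G₂.IsExactZ (R.r α)) := by

  constructor
  · intro α α' h
    funext e
    obtain ⟨e', rfl⟩ := R.b_surj e
    exact congrFun h e'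
  refine ⟨?_, ?_, ?_, ?_, ?_⟩
  · intro α
    have h := R.gd_cycle_iff (A := ℝ) α
    constructor
    · intro hα v
      have : ∀ x, WGraph.Refinement.gd G₁ α x = 0 := fun x => hα x
      exact h.mp this v
    · intro hβ x
      exact h.mpr (fun v => hβ v) x
  · intro β hβ
    obtain ⟨α, rfl⟩ := R.cycle_surj (A := ℝ) β (fun v => hβ v)
    exact ⟨α, fun x => (R.gd_cycle_iff α).mpr (fun v => hβ v) x, rfl⟩
  · intro α
    have h := R.gd_cycle_iff (A := ℤ) α
    constructor
    · intro hα v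
      exact h.mp (fun x => hα x) v
    · intro hβ x
      exact h.mpr (fun v => hβ v) x
  · intro β hβ
    obtain ⟨α, rfl⟩ := R.cycle_surj (A := ℤ) β (fun v => hβ v)
    exact ⟨α, fun x => (R.gd_cycle_iff α).mpr (fun v => hβ v) x, rfl⟩
  · exact R.exact_lift
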